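/- Margin-based misclassification bound (case γ > 0): let φ, φ̂ be real-valued random variables (functions of X and auxiliary randomness) such that P(0 < |φ| ≤ t) ≤ C·t^γ for all t > 0, with constants C > 0 and γ > 0. Then E[ |φ| · 𝟙{ sign(φ̂) ≠ sign(φ), φ ≠ 0 } ] ≤ E[ |φ| · 𝟙{ |φ̂ − φ| ≥ |φ|, φ ≠ 0 } ] ≤ (γ+2)·(2/γ)^{γ/(γ+2)} · C^{1/(γ+2)} · ( E[(φ̂ − φ)²] )^{(γ+1)/(γ+2)}. -/

import Mathlib

open MeasureTheory

private theorem alg8aux (C S γ : ℝ) (hC : 0 < C) (hS : 0 < S) (hγ : 0 < γ) :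
    S / (2 * ((γ/2) ^ (γ/(γ+2)) * (S/C) ^ (1/(γ+2))))
      + ((γ/2) ^ (γ/(γ+2)) * (S/C) ^ (1/(γ+2))) / 2
          * (C * ((2/γ) ^ (2/(γ+2)) * (S/C) ^ (1/(γ+2))) ^ γ)
      + S / ((2/γ) ^ (2/(γ+2)) * (S/C) ^ (1/(γ+2)))
    ≤ (γ + 2) * (2/γ) ^ (γ/(γ+2)) * C ^ (1/(γ+2)) * S ^ ((γ+1)/(γ+2)) := by
  have hγ2 : (0:ℝ) < γ + 2 := by linarith
  set a := (γ/2) ^ (γ/(γ+2)) * (S/C) ^ (1/(γ+2)) with ha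
  set t := (2/γ) ^ (2/(γ+2)) * (S/C) ^ (1/(γ+2)) with ht
  have hapos : 0 < a := by positivity
  have htpos : 0 < t := by positivity
  set u := (2/γ) ^ (γ/(γ+2)) with hu
  set K := C ^ (1/(γ+2)) * S ^ ((γ+1)/(γ+2)) with hK
  have hupos : 0 < u := by positivity
  have hKpos : 0 < K := by positivity
  have hloga : Real.log a = (γ/(γ+2)) * (Real.log γ - Real.log 2)
      + (1/(γ+2)) * (Real.log S - Real.log C) := by
    rw [ha, Real.log_mul (by positivity) (by positivity), Real.log_rpow (by positivity),
      Real.log_rpow (by positivity), Real.log_div hγ.ne' two_ne_zero,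
      Real.log_div hS.ne' hC.ne']
  have hlogt : Real.log t = (2/(γ+2)) * (Real.log 2 - Real.log γ)
      + (1/(γ+2)) * (Real.log S - Real.log C) := by
    rw [ht, Real.log_mul (by positivity) (by positivity), Real.log_rpow (by positivity),
      Real.log_rpow (by positivity), Real.log_div two_ne_zero hγ.ne',
      Real.log_div hS.ne' hC.ne']
  have hlogu : Real.log u = (γ/(γ+2)) * (Real.log 2 - Real.log γ) := by
    rw [hu, Real.log_rpow (by positivity), Real.log_div two_ne_zero hγ.ne']
  have hlogK : Real.log K = (1/(γ+2)) * Real.log C + ((γ+1)/(γ+2)) * Real.log S := by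
    rw [hK, Real.log_mul (by positivity) (by positivity), Real.log_rpow hC, Real.log_rpow hS]
  have E1 : S / (2 * a) = 1/2 * u * K := by
    have hL : (0:ℝ) < S / (2 * a) := by positivity
    have hR : (0:ℝ) < 1/2 * u * K := by positivity
    rw [← Real.exp_log hL, ← Real.exp_log hR]
    congr 1
    rw [Real.log_div hS.ne' (by positivity), Real.log_mul two_ne_zero hapos.ne',
      Real.log_mul (by positivity) hKpos.ne', Real.log_mul (by norm_num) hupos.ne',
      hloga, hlogu, hlogK]
    have h2 : Real.log (1/2) = - Real.log 2 := by
      rw [one_div, Real.log_inv]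
    rw [h2]; field_simp; ring
  have E2 : a / 2 * (C * t ^ γ) = 1/2 * u * K := by
    have hL : (0:ℝ) < a / 2 * (C * t ^ γ) := by positivity
    have hR : (0:ℝ) < 1/2 * u * K := by positivity
    rw [← Real.exp_log hL, ← Real.exp_log hR]
    congr 1
    rw [Real.log_mul (by positivity) (by positivity), Real.log_div hapos.ne' two_ne_zero,
      Real.log_mul hC.ne' (by positivity), Real.log_rpow htpos,
      Real.log_mul (by positivity) hKpos.ne', Real.log_mul (by norm_num) hupos.ne',
      hloga, hlogt, hlogu, hlogK]
    have h2 : Real.log (1/2) = - Real.log 2 := by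
      rw [one_div, Real.log_inv]
    rw [h2]; field_simp; ring
  have E3 : S / t ≤ (γ + 1) * u * K := by
    have hL : (0:ℝ) < S / t := by positivity
    have hR : (0:ℝ) < (γ + 1) * u * K := by positivity
    rw [← Real.exp_log hL, ← Real.exp_log hR]
    apply Real.exp_le_exp.mpr
    rw [Real.log_div hS.ne' htpos.ne',
      Real.log_mul (by positivity) hKpos.ne', Real.log_mul (by positivity) hupos.ne',
      hlogt, hlogu, hlogK]
    have key : Real.log γ ≤ Real.log 2 + Real.log (γ + 1) := by
      rw [← Real.log_mul two_ne_zero (by positivity)]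
      exact Real.log_le_log hγ (by linarith)
    have expand : Real.log γ - Real.log 2 - Real.log (γ+1) ≤ 0 := by linarith
    have hne : γ + 2 ≠ 0 := hγ2.ne'
    field_simp
    nlinarith [mul_nonneg (mul_nonneg hγ2.le hγ2.le)
      (by linarith : (0:ℝ) ≤ Real.log 2 + Real.log (γ+1) - Real.log γ)]
  have hfin : (γ + 2) * u * C ^ (1/(γ+2)) * S ^ ((γ+1)/(γ+2)) = (γ + 2) * u * K := by
    rw [hK]; ring
  rw [E1, E2, hfin]
  nlinarith [E3, mul_pos hupos hKpos]

/-- Margin-based misclassification bound, case γ > 0. -/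
theorem stmt8 {Ω : Type*} [MeasurableSpace Ω] (μ : Measure Ω) [IsProbabilityMeasure μ]
    (φ φhat : Ω → ℝ) (hφ : Measurable φ) (hφhat : Measurable φhat)
    (hφint : Integrable φ μ) (hsq : Integrable (fun ω => (φhat ω - φ ω) ^ 2) μ)
    (C γ : ℝ) (hC : 0 < C) (hγ : 0 < γ)
    (hmargin : ∀ t > 0, (μ {ω | 0 < |φ ω| ∧ |φ ω| ≤ t}).toReal ≤ C * t ^ γ) :
    (∫ ω, |φ ω| *
        (if (if 0 ≤ φhat ω then (1:ℝ) else -1) ≠ (if 0 ≤ φ ω then 1 else -1) ∧ φ ω ≠ 0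
          then (1:ℝ) else 0) ∂μ)
      ≤ (∫ ω, |φ ω| * (if |φ ω| ≤ |φhat ω - φ ω| ∧ φ ω ≠ 0 then (1:ℝ) else 0) ∂μ)
    ∧ (∫ ω, |φ ω| * (if |φ ω| ≤ |φhat ω - φ ω| ∧ φ ω ≠ 0 then (1:ℝ) else 0) ∂μ)
      ≤ (γ + 2) * (2 / γ) ^ (γ / (γ + 2)) * C ^ (1 / (γ + 2))
          * (∫ ω, (φhat ω - φ ω) ^ 2 ∂μ) ^ ((γ + 1) / (γ + 2)) := by
  -- notation
  set f2 : Ω → ℝ := fun ω => |φ ω| * (if |φ ω| ≤ |φhat ω - φ ω| ∧ φ ω ≠ 0 then (1:ℝ) else 0)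
    with hf2
  have hset2 : MeasurableSet {ω | |φ ω| ≤ |φhat ω - φ ω| ∧ φ ω ≠ 0} := by
    exact (measurableSet_le hφ.abs (hφhat.sub hφ).abs).inter
      (hφ (measurableSet_singleton 0)).compl
  have hf2meas : Measurable f2 :=
    hφ.abs.mul (Measurable.ite hset2 measurable_const measurable_const)
  have hf2nonneg : ∀ ω, 0 ≤ f2 ω := by
    intro ω; rw [hf2]; dsimp only
    split <;> simp [abs_nonneg]
  have hf2int : Integrable f2 μ := by
    refine hφint.abs.mono hf2meas.aestronglyMeasurable (ae_of_all _ fun ω => ?_)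
    simp only [Real.norm_eq_abs, abs_abs]
    rw [hf2]; dsimp only
    split <;> simp [abs_nonneg, abs_abs, le_abs_self]
  -- key pointwise sign inequality
  have hkey : ∀ ω, ((if 0 ≤ φhat ω then (1:ℝ) else -1) ≠ (if 0 ≤ φ ω then 1 else -1)
      ∧ φ ω ≠ 0) → (|φ ω| ≤ |φhat ω - φ ω| ∧ φ ω ≠ 0) := by
    intro ω ⟨h1, h2⟩
    refine ⟨?_, h2⟩
    by_cases ha : 0 ≤ φhat ω <;> by_cases hb : 0 ≤ φ ω <;> simp [ha, hb] at h1 ⊢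
    · -- 0 ≤ φhat, φ < 0
      push_neg at hb
      calc |φ ω| = -φ ω := abs_of_neg hb
        _ ≤ φhat ω - φ ω := by linarith
        _ ≤ |φhat ω - φ ω| := le_abs_self _
    · -- φhat < 0, 0 ≤ φ
      push_neg at ha
      calc |φ ω| = φ ω := abs_of_nonneg hb
        _ ≤ -(φhat ω - φ ω) := by linarith
        _ ≤ |φhat ω - φ ω| := neg_le_abs _
  constructor
  · -- Part 1
    refine integral_mono_of_nonneg (ae_of_all _ fun ω => ?_) hf2int (ae_of_all _ fun ω => ?_)
    · exact mul_nonneg (abs_nonneg _) (by by_cases h :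
        ((if 0 ≤ φhat ω then (1:ℝ) else -1) ≠ (if 0 ≤ φ ω then 1 else -1) ∧ φ ω ≠ 0) <;>
        simp [h])
    · dsimp only
      by_cases h : (if 0 ≤ φhat ω then (1:ℝ) else -1) ≠ (if 0 ≤ φ ω then 1 else -1) ∧ φ ω ≠ 0
      · rw [if_pos h, if_pos (hkey ω h)]
      · rw [if_neg h, mul_zero]
        exact hf2nonneg ω
  · -- Part 2
    set S := ∫ ω, (φhat ω - φ ω) ^ 2 ∂μ with hSdef
    have hSnn : 0 ≤ S := integral_nonneg fun ω => sq_nonneg _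
    rcases eq_or_lt_of_le hSnn with hS0 | hSpos
    · -- S = 0 case
      have hzero : (fun ω => (φhat ω - φ ω) ^ 2) =ᵐ[μ] 0 :=
        (integral_eq_zero_iff_of_nonneg (fun ω => sq_nonneg _) hsq).mp hS0.symm
      have hf20 : f2 =ᵐ[μ] 0 := by
        filter_upwards [hzero] with ω hω
        have heq : φhat ω = φ ω := by
          have := pow_eq_zero_iff (n := 2) (by norm_num) |>.mp hω
          linarith [this]
        rw [hf2]; dsimp only
        rw [if_neg]
        · simp
        · rintro ⟨h1, h2⟩
          rw [heq, sub_self, abs_zero] at h1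
          exact h2 (abs_nonpos_iff.mp h1)
      rw [integral_congr_ae hf20]
      simp only [Pi.zero_apply, integral_zero]
      rw [← hS0, Real.zero_rpow (by positivity : (γ+1)/(γ+2) ≠ 0), mul_zero]
    · -- S > 0 case
      have hγ2 : (0:ℝ) < γ + 2 := by linarith
      set a := (γ/2) ^ (γ/(γ+2)) * (S/C) ^ (1/(γ+2)) with hadef
      set t := (2/γ) ^ (2/(γ+2)) * (S/C) ^ (1/(γ+2)) with htdef
      have hapos : 0 < a := by positivity
      have htpos : 0 < t := by positivity
      set B := {ω | 0 < |φ ω| ∧ |φ ω| ≤ t} with hBdef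
      have hBmeas : MeasurableSet B :=
        (measurableSet_lt measurable_const hφ.abs).inter (measurableSet_le hφ.abs measurable_const)
      set indB : Ω → ℝ := fun ω => if 0 < |φ ω| ∧ |φ ω| ≤ t then (1:ℝ) else 0 with hindB
      have hindBnn : ∀ ω, 0 ≤ indB ω := by intro ω; rw [hindB]; dsimp only; split <;> norm_num
      have hindBmeas : Measurable indB :=
        Measurable.ite hBmeas measurable_const measurable_const
      have hindBint : Integrable indB μ := by
        refine (integrable_const (1:ℝ)).mono' hindBmeas.aestronglyMeasurable
          (ae_of_all _ fun ω => ?_)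
        rw [hindB]; dsimp only
        split <;> simp
      -- pointwise bound
      have hpt : ∀ ω, f2 ω ≤ (φhat ω - φ ω)^2 / (2*a) + a/2 * indB ω
          + (φhat ω - φ ω)^2 / t := by
        intro ω
        set x := φhat ω - φ ω with hx
        rw [hf2, hindB]; dsimp only
        by_cases h : |φ ω| ≤ |x| ∧ φ ω ≠ 0
        · rw [if_pos h, mul_one]
          obtain ⟨hle, hne⟩ := h
          by_cases hc : |φ ω| ≤ t
          · rw [if_pos ⟨abs_pos.mpr hne, hc⟩, mul_one]
            have hsq' : 2*a*|x| ≤ x^2 + a^2 := by nlinarith [sq_nonneg (|x| - a), sq_abs x]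
            have amgm : |x| ≤ x^2/(2*a) + a/2 := by
              rw [show x^2/(2*a) + a/2 = (x^2 + a^2)/(2*a) by field_simp]
              rw [le_div_iff₀ (by positivity)]
              linarith [hsq']
            have hq : 0 ≤ x^2/t := by positivity
            linarith [hle, amgm]
          · rw [if_neg (fun hh => hc hh.2), mul_zero, add_zero]
            push_neg at hc
            have h1 : |x| ≤ x^2/t := by
              rw [le_div_iff₀ htpos]
              nlinarith [abs_nonneg x, sq_abs x, hle, hc]
            have h2 : 0 ≤ x^2/(2*a) := by positivity
            linarith [hle, h1]
        · rw [if_neg h, mul_zero]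
          have h1 : 0 ≤ x^2/(2*a) := by positivity
          have h2 : 0 ≤ x^2/t := by positivity
          have h3 : 0 ≤ a/2 * (if 0 < |φ ω| ∧ |φ ω| ≤ t then (1:ℝ) else 0) := by
            apply mul_nonneg (by positivity); split <;> norm_num
          linarith
      have hint1 : Integrable (fun ω => (φhat ω - φ ω)^2 / (2*a)) μ := hsq.div_const _
      have hint2 : Integrable (fun ω => a/2 * indB ω) μ := hindBint.const_mul _
      have hint3 : Integrable (fun ω => (φhat ω - φ ω)^2 / t) μ := hsq.div_const _
      have step1 : (∫ ω, f2 ω ∂μ) ≤ S/(2*a) + a/2 * (μ B).toReal + S/t := by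
        have hintall : Integrable (fun ω => (φhat ω - φ ω)^2/(2*a) + a/2 * indB ω
            + (φhat ω - φ ω)^2/t) μ := (hint1.add hint2).add hint3
        have h := integral_mono_of_nonneg (ae_of_all _ hf2nonneg) hintall (ae_of_all _ hpt)
        have hint12 : Integrable (fun ω => (φhat ω - φ ω)^2/(2*a) + a/2 * indB ω) μ :=
          hint1.add hint2
        rw [integral_add hint12 hint3, integral_add hint1 hint2,
          integral_div, integral_div, integral_const_mul] at h
        have hind : (∫ ω, indB ω ∂μ) = (μ B).toReal := by
          have : indB = Set.indicator B (fun _ => (1:ℝ)) := by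
            funext ω
            rw [hindB, Set.indicator_apply]
            rfl
          rw [this, MeasureTheory.integral_indicator_const _ hBmeas, smul_eq_mul, mul_one]
          rfl
        rw [hind] at h
        exact h
      have step2 : a/2 * (μ B).toReal ≤ a/2 * (C * t ^ γ) :=
        mul_le_mul_of_nonneg_left (hmargin t htpos) (by positivity)
      calc (∫ ω, f2 ω ∂μ) ≤ S/(2*a) + a/2 * (C * t ^ γ) + S/t := by linarith
        _ ≤ (γ + 2) * (2/γ) ^ (γ/(γ+2)) * C ^ (1/(γ+2)) * S ^ ((γ+1)/(γ+2)) :=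
            alg8aux C S γ hC hSpos hγ
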